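/- arXiv:1908.05857 — 2 statements merged into one kernel-verified Lean document; each statement's English description precedes it below -/
import Mathlib

section
/- For 0 < ρ < 1, μ > 0, t ≥ 0 and positive integer n, the series ∑_{v=0}^{∞} ρ^{nv} F(v+1, μt), where F(v+1,z) = γ(v+1,z)/Γ(v+1) is the regularized lower incomplete Gamma function, equals (1 - e^{-μt(1-ρ^n)})/(1 - ρ^n). -/
open Finset

/-- the lower incomplete Gamma function `γ(s, x) = ∫₀ˣ t^{s-1} e^{-t} dt`. -/
noncomputable def lowerGamma (s x : ℝ) : ℝ := ∫ t in (0 : ℝ)..x, t ^ (s - 1) * Real.exp (-t)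

lemma lowerGamma_nat (v : ℕ) (x : ℝ) :
    lowerGamma ((v : ℝ) + 1) x
      = (v.factorial : ℝ) * (1 - Real.exp (-x) * ∑ k ∈ range (v + 1), x ^ k / k.factorial) := by
  have hint : lowerGamma ((v : ℝ) + 1) x = ∫ s in (0 : ℝ)..x, s ^ v * Real.exp (-s) := by
    unfold lowerGamma
    congr 1
    ext s
    rw [show (v : ℝ) + 1 - 1 = (v : ℝ) by ring, Real.rpow_natCast]
  rw [hint]
  set F : ℝ → ℝ := fun s => -Real.exp (-s) * ∑ k ∈ range (v + 1),
    ((v.factorial : ℝ) / k.factorial) * s ^ k with hF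
  have hderiv : ∀ s : ℝ, HasDerivAt F (s ^ v * Real.exp (-s)) s := by
    intro s
    have hP : HasDerivAt (fun s : ℝ => ∑ k ∈ range (v + 1),
        ((v.factorial : ℝ) / k.factorial) * s ^ k)
        (∑ k ∈ range (v + 1), ((v.factorial : ℝ) / k.factorial) * (k * s ^ (k - 1))) s :=
      HasDerivAt.fun_sum fun k _ => (hasDerivAt_pow k s).const_mul _
    have hE : HasDerivAt (fun s : ℝ => -Real.exp (-s)) (Real.exp (-s)) s := by
      have := ((Real.hasDerivAt_exp (-s)).comp s (hasDerivAt_neg s)).fun_neg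
      simpa [Function.comp_def] using this
    have := hE.fun_mul hP
    refine this.congr_deriv ?_
    have hsum : ∑ k ∈ range (v + 1), ((v.factorial : ℝ) / k.factorial) * (k * s ^ (k - 1))
        = ∑ j ∈ range v, ((v.factorial : ℝ) / j.factorial) * s ^ j := by
      rw [Finset.sum_range_succ']
      simp only [Nat.cast_zero, zero_mul, mul_zero, add_zero]
      apply Finset.sum_congr rfl
      intro i _
      have h1 : ((i + 1).factorial : ℝ) = (i + 1) * i.factorial := by
        rw [Nat.factorial_succ]; push_cast; ring
      have h2 : (i.factorial : ℝ) ≠ 0 := by positivity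
      have h3 : ((i : ℝ) + 1) ≠ 0 := by positivity
      rw [h1]
      simp only [Nat.add_sub_cancel, Nat.cast_add, Nat.cast_one]
      field_simp
    rw [hsum]
    have hPsplit : ∑ k ∈ range (v + 1), ((v.factorial : ℝ) / k.factorial) * s ^ k
        = (∑ j ∈ range v, ((v.factorial : ℝ) / j.factorial) * s ^ j)
          + ((v.factorial : ℝ) / v.factorial) * s ^ v := Finset.sum_range_succ _ v
    have h2 : (v.factorial : ℝ) ≠ 0 := by positivity
    rw [hPsplit, div_self h2]
    ring
  have hcont : Continuous fun s : ℝ => s ^ v * Real.exp (-s) := by continuity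
  rw [intervalIntegral.integral_eq_sub_of_hasDerivAt (fun s _ => hderiv s)
    (hcont.intervalIntegrable 0 x)]
  have hF0 : F 0 = -(v.factorial : ℝ) := by
    rw [hF]
    simp only [neg_zero, Real.exp_zero]
    rw [Finset.sum_eq_single 0]
    · simp
    · intro k _ hk
      simp [zero_pow hk]
    · simp
  have key : ∑ k ∈ range (v + 1), ((v.factorial : ℝ) / k.factorial) * x ^ k
      = (v.factorial : ℝ) * ∑ k ∈ range (v + 1), x ^ k / k.factorial := by
    rw [Finset.mul_sum]
    apply Finset.sum_congr rfl
    intro k _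
    have h2 : (k.factorial : ℝ) ≠ 0 := by positivity
    field_simp
  rw [hF0]
  simp only [hF]
  rw [key]
  ring

/-- For `0 < ρ < 1`, `μ > 0`, `t ≥ 0` and positive integer `n`, the series
`∑_{v} ρ^{nv} F(v+1, μt)` equals `(1 - e^{-μt(1-ρ^n)})/(1 - ρ^n)`. -/
theorem geom_weighted_regIncGamma_sum (rho mu t : ℝ) (n : ℕ) (hn : 1 ≤ n)
    (h0 : 0 < rho) (h1 : rho < 1) (hmu : 0 < mu) (ht : 0 ≤ t) :
    ∑' v : ℕ, rho ^ (n * v) * (lowerGamma ((v : ℝ) + 1) (mu * t) / Real.Gamma ((v : ℝ) + 1))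
      = (1 - Real.exp (-(mu * t * (1 - rho ^ n)))) / (1 - rho ^ n) := by
  set r : ℝ := rho ^ n with hrdef
  have hr0 : 0 < r := pow_pos h0 n
  have hr1 : r < 1 := pow_lt_one₀ h0.le h1 (by omega)
  set z : ℝ := mu * t with hzdef
  have hz : 0 ≤ z := by positivity
  -- rewrite each term
  have hterm : ∀ v : ℕ,
      rho ^ (n * v) * (lowerGamma ((v : ℝ) + 1) z / Real.Gamma ((v : ℝ) + 1))
        = r ^ v - Real.exp (-z) * (r ^ v * ∑ k ∈ range (v + 1), z ^ k / k.factorial) := by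
    intro v
    have hG : Real.Gamma ((v : ℝ) + 1) = v.factorial :=
      Real.Gamma_nat_eq_factorial v
    have hfac : (v.factorial : ℝ) ≠ 0 := by positivity
    rw [hG, lowerGamma_nat, pow_mul, ← hrdef]
    rw [mul_comm (v.factorial : ℝ), mul_div_assoc, div_self hfac, mul_one]
    ring
  simp only [← hzdef, hterm]
  -- summability facts
  have ha : Summable fun k : ℕ => ‖(r * z) ^ k / k.factorial‖ := by
    have := Real.summable_pow_div_factorial (r * z)
    exact this.abs
  have hb : Summable fun j : ℕ => ‖r ^ j‖ :=
    (summable_geometric_of_lt_one hr0.le hr1).abs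
  have hcauchy :
      (∑' k : ℕ, (r * z) ^ k / k.factorial) * (∑' j : ℕ, r ^ j)
        = ∑' v : ℕ, ∑ k ∈ range (v + 1), ((r * z) ^ k / k.factorial) * r ^ (v - k) :=
    tsum_mul_tsum_eq_tsum_sum_range_of_summable_norm ha hb
  have hSsum : Summable fun v : ℕ =>
      ∑ k ∈ range (v + 1), ((r * z) ^ k / k.factorial) * r ^ (v - k) :=
    (summable_norm_sum_mul_range_of_summable_norm ha hb).of_norm
  have hred : ∀ v : ℕ, ∑ k ∈ range (v + 1), ((r * z) ^ k / k.factorial) * r ^ (v - k)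
      = r ^ v * ∑ k ∈ range (v + 1), z ^ k / k.factorial := by
    intro v
    rw [Finset.mul_sum]
    apply Finset.sum_congr rfl
    intro k hk
    have hk' : k ≤ v := by
      simp only [Finset.mem_range] at hk; omega
    have hpow : r ^ k * r ^ (v - k) = r ^ v := by
      rw [← pow_add, show k + (v - k) = v by omega]
    calc (r * z) ^ k / k.factorial * r ^ (v - k)
        = (r ^ k * r ^ (v - k)) * (z ^ k / k.factorial) := by rw [mul_pow]; ring
      _ = r ^ v * (z ^ k / k.factorial) := by rw [hpow]
  have hS2 : Summable fun v : ℕ => r ^ v * ∑ k ∈ range (v + 1), z ^ k / k.factorial := by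
    simpa only [hred] using hSsum
  have hgeo : Summable fun v : ℕ => (r : ℝ) ^ v := summable_geometric_of_lt_one hr0.le hr1
  have hexp : ∀ x : ℝ, (∑' k : ℕ, x ^ k / k.factorial) = Real.exp x := by
    intro x
    rw [Real.exp_eq_exp_ℝ, NormedSpace.exp_eq_tsum_div]
  -- compute
  rw [Summable.tsum_sub hgeo (hS2.mul_left _)]
  rw [tsum_mul_left]
  have h1r : (1 : ℝ) - r ≠ 0 := by linarith
  have hgval : (∑' v : ℕ, (r : ℝ) ^ v) = (1 - r)⁻¹ := tsum_geometric_of_lt_one hr0.le hr1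
  have hval : (∑' v : ℕ, r ^ v * ∑ k ∈ range (v + 1), z ^ k / k.factorial)
      = Real.exp (r * z) * (1 - r)⁻¹ := by
    simp only [← hred]
    rw [← hcauchy, hexp, hgval]
  rw [hgval, hval]
  rw [show Real.exp (-z) * (Real.exp (r * z) * (1 - r)⁻¹)
      = Real.exp (-z + r * z) * (1 - r)⁻¹ by rw [Real.exp_add]; ring]
  rw [show -z + r * z = -(z * (1 - r)) by ring]
  rw [div_eq_mul_inv]
  ring
end

section
/- Let g ~ Gamma(M, 1) with integer M ≥ 1, and define ϱ(s) = ∫₀^R (1 - E[e^{-s g ℓ(r)}]) r dr with ℓ(r) = max(r,d₀)^{-α}, 0 < d₀ < R, α > 2, s > 0. Then ϱ(s) = (R²/2)(1 - E[e^{-s g R^{-α}}]) + (1/2) E[(s g)^{2/α} (Γ(1 - 2/α, s g R^{-α}) - Γ(1 - 2/α, s g d₀^{-α}))], where E[e^{-s g R^{-α}}] = (1 + s R^{-α})^{-M}. -/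
open MeasureTheory

noncomputable def uG (p y : ℝ) : ℝ := ∫ t in Set.Ioi y, t ^ (p - 1) * Real.exp (-t)

namespace MyIntegralId
lemma integral_id_copy {a b : ℝ} : ∫ x in a..b, x = (b ^ 2 - a ^ 2) / 2 :=
  integral_id
end MyIntegralId

lemma uG_integrand_integrable {p : ℝ} (hp : 0 < p) :
    IntegrableOn (fun t : ℝ => t ^ (p - 1) * Real.exp (-t)) (Set.Ioi 0) :=
  (Real.GammaIntegral_convergent hp).congr_fun (fun t _ => mul_comm _ _) measurableSet_Ioi

lemma uG_integrand_measurable (p : ℝ) :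
    Measurable (fun t : ℝ => t ^ (p - 1) * Real.exp (-t)) :=
  (measurable_id.pow_const _).mul (Real.measurable_exp.comp measurable_neg)

lemma uG_hasDerivAt {p : ℝ} (hp : 0 < p) {y : ℝ} (hy : 0 < y) :
    HasDerivAt (uG p) (-(y ^ (p - 1) * Real.exp (-y))) y := by
  set h : ℝ → ℝ := fun t => t ^ (p - 1) * Real.exp (-t) with hh
  have hint := uG_integrand_integrable hp
  have hF : HasDerivAt (fun z => (∫ t in Set.Ioi (0:ℝ), h t) - ∫ t in (0:ℝ)..z, h t)
      (-(h y)) y := by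
    have h1 : IntervalIntegrable h volume 0 y :=
      (intervalIntegrable_iff_integrableOn_Ioc_of_le hy.le).mpr
        (hint.mono_set Set.Ioc_subset_Ioi_self)
    have h2 : ContinuousAt h y :=
      (Real.continuousAt_rpow_const y (p - 1) (Or.inl hy.ne')).mul
        ((Real.continuous_exp.comp continuous_neg).continuousAt)
    have h3 := intervalIntegral.integral_hasDerivAt_right h1
      ((uG_integrand_measurable p).stronglyMeasurable.stronglyMeasurableAtFilter) h2
    simpa using h3.const_sub _
  refine hF.congr_of_eventuallyEq ?_
  filter_upwards [isOpen_Ioi.mem_nhds hy] with z hz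
  have hz0 : (0:ℝ) < z := hz
  have hsplit : (∫ t in Set.Ioi (0:ℝ), h t)
      = (∫ t in Set.Ioc 0 z, h t) + ∫ t in Set.Ioi z, h t := by
    rw [← MeasureTheory.setIntegral_union (Set.Ioc_disjoint_Ioi le_rfl) measurableSet_Ioi
      (hint.mono_set Set.Ioc_subset_Ioi_self) (hint.mono_set (Set.Ioi_subset_Ioi hz0.le)),
      Set.Ioc_union_Ioi_eq_Ioi hz0.le]
  show uG p z = _
  rw [uG, intervalIntegral.integral_of_le hz0.le, hsplit]
  ring

lemma key_integral {c d0 R alpha : ℝ} (hc : 0 < c) (hd : 0 < d0) (hdR : d0 < R)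
    (ha : 2 < alpha) :
    ∫ r in Set.Ioc (0:ℝ) R, Real.exp (-(c * (max r d0) ^ (-alpha))) * r
      = R ^ 2 / 2 * Real.exp (-(c * R ^ (-alpha)))
        - 1 / 2 * c ^ (2 / alpha) * (uG (1 - 2 / alpha) (c * R ^ (-alpha))
            - uG (1 - 2 / alpha) (c * d0 ^ (-alpha))) := by
  have ha0 : (0:ℝ) < alpha := by linarith
  have hp : 0 < 1 - 2 / alpha := by
    have : 2 / alpha < 1 := (div_lt_one ha0).mpr ha
    linarith
  have hR : (0:ℝ) < R := hd.trans hdR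
  set Ψ : ℝ → ℝ := fun r => r ^ 2 / 2 * Real.exp (-(c * r ^ (-alpha)))
      - 1 / 2 * c ^ (2 / alpha) * uG (1 - 2 / alpha) (c * r ^ (-alpha)) with hΨ
  have hderiv : ∀ r : ℝ, 0 < r →
      HasDerivAt Ψ (Real.exp (-(c * r ^ (-alpha))) * r) r := by
    intro r hr0
    have hy : 0 < c * r ^ (-alpha) := mul_pos hc (Real.rpow_pos_of_pos hr0 _)
    have h1 : HasDerivAt (fun t : ℝ => t ^ (-alpha)) (-alpha * r ^ (-alpha - 1)) r :=
      Real.hasDerivAt_rpow_const (Or.inl hr0.ne')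
    have h2 : HasDerivAt (fun t : ℝ => c * t ^ (-alpha)) (c * (-alpha * r ^ (-alpha - 1))) r :=
      h1.const_mul c
    have h3 : HasDerivAt (fun t : ℝ => Real.exp (-(c * t ^ (-alpha))))
        (Real.exp (-(c * r ^ (-alpha))) * -(c * (-alpha * r ^ (-alpha - 1)))) r :=
      h2.neg.exp
    have h4 : HasDerivAt (fun t : ℝ => t ^ 2 / 2) r r := by
      have := (hasDerivAt_pow 2 r).div_const 2
      simpa using this
    have h5 := h4.mul h3
    have h6 : HasDerivAt (fun t : ℝ => uG (1 - 2 / alpha) (c * t ^ (-alpha)))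
        (-((c * r ^ (-alpha)) ^ (1 - 2 / alpha - 1) * Real.exp (-(c * r ^ (-alpha))))
          * (c * (-alpha * r ^ (-alpha - 1)))) r :=
      by have := (uG_hasDerivAt hp hy).comp r h2; exact this
    have h7 := h5.sub (h6.const_mul (1 / 2 * c ^ (2 / alpha)))
    rw [hΨ]
    convert h7 using 1
    · rfl
    · rfl
    · rfl
    have hkey : c ^ (2 / alpha) * (c * r ^ (-alpha)) ^ (1 - 2 / alpha - 1) = r ^ 2 := by
      have h8 : (1:ℝ) - 2 / alpha - 1 = -(2 / alpha) := by ring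
      rw [h8, Real.mul_rpow hc.le (Real.rpow_nonneg hr0.le _), ← Real.rpow_natCast r 2,
        ← Real.rpow_mul hr0.le, ← mul_assoc, ← Real.rpow_add hc]
      have h9 : (2:ℝ) / alpha + -(2 / alpha) = 0 := by ring
      have h10 : -alpha * -(2 / alpha) = ((2:ℕ):ℝ) := by
        push_cast
        field_simp
      rw [h9, h10, Real.rpow_zero, one_mul]
    linear_combination
      (c * alpha * r ^ (-alpha - 1) * Real.exp (-(c * r ^ (-alpha))) / 2) * hkey
  -- continuity of the full integrand
  have hqcont : Continuous fun r : ℝ => (max r d0) ^ (-alpha) := by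
    rw [continuous_iff_continuousAt]
    intro r
    have hmax : (0:ℝ) < max r d0 := lt_max_of_lt_right hd
    have hm : Continuous fun u : ℝ => max u d0 := continuous_id.max continuous_const
    exact ContinuousAt.comp (x := r) (g := fun u : ℝ => u ^ (-alpha))
      (Real.continuousAt_rpow_const _ _ (Or.inl hmax.ne')) hm.continuousAt
  have hcont : Continuous fun r : ℝ => Real.exp (-(c * (max r d0) ^ (-alpha))) * r :=
    ((Real.continuous_exp.comp ((continuous_const.mul hqcont).neg))).mul continuous_id
  -- split the integral
  have hsplit : ∫ r in Set.Ioc (0:ℝ) R, Real.exp (-(c * (max r d0) ^ (-alpha))) * r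
      = (∫ r in Set.Ioc (0:ℝ) d0, Real.exp (-(c * (max r d0) ^ (-alpha))) * r)
        + ∫ r in Set.Ioc d0 R, Real.exp (-(c * (max r d0) ^ (-alpha))) * r := by
    rw [← MeasureTheory.setIntegral_union (Set.Ioc_disjoint_Ioc_of_le le_rfl) measurableSet_Ioc
      (hcont.integrableOn_Ioc) (hcont.integrableOn_Ioc),
      Set.Ioc_union_Ioc_eq_Ioc hd.le hdR.le]
  rw [hsplit]
  have hleft : (∫ r in Set.Ioc (0:ℝ) d0, Real.exp (-(c * (max r d0) ^ (-alpha))) * r)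
      = Real.exp (-(c * d0 ^ (-alpha))) * (d0 ^ 2 / 2) := by
    rw [MeasureTheory.setIntegral_congr_fun measurableSet_Ioc
      (g := fun r => Real.exp (-(c * d0 ^ (-alpha))) * r)
      (fun r hr => by rw [max_eq_right hr.2]),
      ← intervalIntegral.integral_of_le hd.le, intervalIntegral.integral_const_mul,
      MyIntegralId.integral_id_copy]
    ring
  have hright : (∫ r in Set.Ioc d0 R, Real.exp (-(c * (max r d0) ^ (-alpha))) * r)
      = Ψ R - Ψ d0 := by
    rw [MeasureTheory.setIntegral_congr_fun measurableSet_Ioc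
      (g := fun r => Real.exp (-(c * r ^ (-alpha))) * r)
      (fun r hr => by rw [max_eq_left hr.1.le]),
      ← intervalIntegral.integral_of_le hdR.le]
    apply intervalIntegral.integral_eq_sub_of_hasDerivAt
    · intro t ht
      rw [Set.uIcc_of_le hdR.le] at ht
      exact hderiv t (hd.trans_le ht.1)
    · apply ContinuousOn.intervalIntegrable
      intro t ht
      rw [Set.uIcc_of_le hdR.le] at ht
      have ht0 : (0:ℝ) < t := hd.trans_le ht.1
      have hca : ContinuousAt (fun r : ℝ => Real.exp (-(c * r ^ (-alpha))) * r) t := by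
        have h1 : ContinuousAt (fun r : ℝ => r ^ (-alpha)) t :=
          Real.continuousAt_rpow_const t (-alpha) (Or.inl ht0.ne')
        exact ((Real.continuous_exp.continuousAt.comp
          ((continuousAt_const.mul h1).neg)).mul continuousAt_id)
      exact hca.continuousWithinAt
  rw [hleft, hright, hΨ]
  ring


lemma rho_measurable (M : ℕ) :
    Measurable (fun x : ℝ => x ^ ((M : ℝ) - 1) * Real.exp (-x) / (Nat.factorial (M - 1) : ℝ)) :=
  ((measurable_id.pow_const _).mul (Real.measurable_exp.comp measurable_neg)).div_const _

lemma rho_integrable (M : ℕ) (hM : 1 ≤ M) :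
    IntegrableOn (fun x : ℝ => x ^ ((M : ℝ) - 1) * Real.exp (-x) / (Nat.factorial (M - 1) : ℝ))
      (Set.Ioi 0) := by
  have hMpos : (0:ℝ) < (M : ℝ) := by exact_mod_cast hM
  exact MeasureTheory.IntegrableOn.congr_fun
    ((Real.GammaIntegral_convergent hMpos).div_const _)
    (fun t _ => by rw [mul_comm]) measurableSet_Ioi

lemma gamma_mgf (M : ℕ) (hM : 1 ≤ M) {k : ℝ} (hk : 0 ≤ k) :
    ∫ x in Set.Ioi (0:ℝ),
        x ^ ((M : ℝ) - 1) * Real.exp (-x) / (Nat.factorial (M - 1) : ℝ) * Real.exp (-(k * x))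
      = (1 + k) ^ (-(M : ℝ)) := by
  have h1k : (0:ℝ) < 1 + k := by linarith
  have hMpos : (0:ℝ) < (M : ℝ) := by exact_mod_cast hM
  have hpt : ∀ x : ℝ,
      x ^ ((M : ℝ) - 1) * Real.exp (-x) / (Nat.factorial (M - 1) : ℝ) * Real.exp (-(k * x))
        = x ^ ((M : ℝ) - 1) * Real.exp (-((1 + k) * x)) * ((Nat.factorial (M - 1) : ℝ))⁻¹ := by
    intro x
    rw [div_eq_mul_inv, mul_right_comm, mul_assoc (x ^ ((M : ℝ) - 1)), ← Real.exp_add]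
    congr 2
    ring
  simp_rw [hpt]
  rw [MeasureTheory.integral_mul_const, Real.integral_rpow_mul_exp_neg_mul_Ioi hMpos h1k]
  have hMM : ((M - 1 : ℕ) : ℝ) + 1 = (M : ℝ) := by
    have := Nat.succ_pred_eq_of_pos (lt_of_lt_of_le Nat.zero_lt_one hM)
    exact_mod_cast congrArg (Nat.cast : ℕ → ℝ) this
  have hGamma : Real.Gamma (M : ℝ) = (Nat.factorial (M - 1) : ℝ) := by
    rw [← hMM, Real.Gamma_nat_eq_factorial]
  rw [hGamma, mul_assoc, mul_inv_cancel₀ (by exact_mod_cast (Nat.factorial_ne_zero (M-1))),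
    mul_one, Real.rpow_neg h1k.le, ← Real.inv_rpow h1k.le, one_div]

lemma rho_mul_exp_integrable (M : ℕ) (hM : 1 ≤ M) {k : ℝ} (hk : 0 ≤ k) :
    IntegrableOn (fun x : ℝ =>
        x ^ ((M : ℝ) - 1) * Real.exp (-x) / (Nat.factorial (M - 1) : ℝ) * Real.exp (-(k * x)))
      (Set.Ioi 0) := by
  apply Integrable.mono ((rho_integrable M hM))
  · exact ((rho_measurable M).mul
      (Real.measurable_exp.comp ((measurable_id.const_mul k).neg))).aestronglyMeasurable
  · filter_upwards [ae_restrict_mem measurableSet_Ioi] with x hx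
    rw [norm_mul]
    have h1 : Real.exp (-(k * x)) ≤ 1 := by
      rw [Real.exp_le_one_iff]
      have : (0:ℝ) ≤ k * x := mul_nonneg hk (le_of_lt hx)
      linarith
    calc ‖x ^ ((M : ℝ) - 1) * Real.exp (-x) / (Nat.factorial (M - 1) : ℝ)‖ * ‖Real.exp (-(k * x))‖
        ≤ ‖x ^ ((M : ℝ) - 1) * Real.exp (-x) / (Nat.factorial (M - 1) : ℝ)‖ * 1 := by
          apply mul_le_mul_of_nonneg_left _ (norm_nonneg _)
          rw [Real.norm_eq_abs, abs_of_pos (Real.exp_pos _)]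
          exact h1
      _ = ‖x ^ ((M : ℝ) - 1) * Real.exp (-x) / (Nat.factorial (M - 1) : ℝ)‖ := mul_one _

/-- For `g ~ Gamma(M,1)` and `ϱ(s) = ∫₀^R (1 - E[e^{-s g ℓ(r)}]) r dr` with
`ℓ(r) = max(r,d₀)^{-α}`, the closed form of `ϱ(s)` in terms of upper incomplete
Gamma functions, together with `E[e^{-s g R^{-α}}] = (1+sR^{-α})^{-M}`. -/
theorem varrho_closed_form (M : ℕ) (hM : 1 ≤ M) (s R d0 alpha : ℝ)
    (hd : 0 < d0) (hdR : d0 < R) (ha : 2 < alpha) (hs : 0 < s) :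
    (∫ r in (0 : ℝ)..R,
        (1 - ∫ x in Set.Ioi (0 : ℝ),
          x ^ ((M : ℝ) - 1) * Real.exp (-x) / (Nat.factorial (M - 1) : ℝ)
            * Real.exp (-(s * x * (max r d0) ^ (-alpha)))) * r)
      = R ^ 2 / 2 * (1 - (1 + s * R ^ (-alpha)) ^ (-(M : ℝ)))
        + 1 / 2 * ∫ x in Set.Ioi (0 : ℝ),
            x ^ ((M : ℝ) - 1) * Real.exp (-x) / (Nat.factorial (M - 1) : ℝ)
              * ((s * x) ^ (2 / alpha)
                * ((∫ t in Set.Ioi (s * x * R ^ (-alpha)), t ^ (1 - 2 / alpha - 1) * Real.exp (-t))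
                  - ∫ t in Set.Ioi (s * x * d0 ^ (-alpha)),
                      t ^ (1 - 2 / alpha - 1) * Real.exp (-t)))
      ∧ (∫ x in Set.Ioi (0 : ℝ),
            x ^ ((M : ℝ) - 1) * Real.exp (-x) / (Nat.factorial (M - 1) : ℝ)
              * Real.exp (-(s * x * R ^ (-alpha))))
          = (1 + s * R ^ (-alpha)) ^ (-(M : ℝ)) := by
  have hR : (0:ℝ) < R := hd.trans hdR
  have hRa : (0:ℝ) < R ^ (-alpha) := Real.rpow_pos_of_pos hR _
  -- notation
  set ρ : ℝ → ℝ :=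
    fun x => x ^ ((M : ℝ) - 1) * Real.exp (-x) / (Nat.factorial (M - 1) : ℝ) with hρ
  -- Part 2 : the Laplace transform of the Gamma density
  have part2 : (∫ x in Set.Ioi (0 : ℝ), ρ x * Real.exp (-(s * x * R ^ (-alpha))))
      = (1 + s * R ^ (-alpha)) ^ (-(M : ℝ)) := by
    have h := gamma_mgf M hM (k := s * R ^ (-alpha)) (by positivity)
    rw [← h]
    apply MeasureTheory.setIntegral_congr_fun measurableSet_Ioi
    intro x _
    have hh : s * x * R ^ (-alpha) = s * R ^ (-alpha) * x := by ring
    simp only [hh]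
    rfl
  refine ⟨?_, part2⟩
  have hρmeas : Measurable ρ := rho_measurable M
  have hρint : IntegrableOn ρ (Set.Ioi 0) := rho_integrable M hM
  have hqcont : Continuous fun r : ℝ => (max r d0) ^ (-alpha) := by
    rw [continuous_iff_continuousAt]
    intro r
    have hmax : (0:ℝ) < max r d0 := lt_max_of_lt_right hd
    have hm : Continuous fun u : ℝ => max u d0 := continuous_id.max continuous_const
    exact ContinuousAt.comp (x := r) (g := fun u : ℝ => u ^ (-alpha))
      (Real.continuousAt_rpow_const _ _ (Or.inl hmax.ne')) hm.continuousAt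
  -- the product integrand
  set f : ℝ × ℝ → ℝ :=
    fun z => ρ z.1 * Real.exp (-(s * z.1 * (max z.2 d0) ^ (-alpha))) * z.2 with hf
  have hfmeas : Measurable f := by
    refine Measurable.mul (Measurable.mul (hρmeas.comp measurable_fst) ?_) measurable_snd
    exact Real.measurable_exp.comp
      (((measurable_fst.const_mul s).mul (hqcont.measurable.comp measurable_snd)).neg)
  have hfint : Integrable f
      ((volume.restrict (Set.Ioi 0)).prod (volume.restrict (Set.Ioc 0 R))) := by
    have hbound : Integrable (fun z : ℝ × ℝ => ρ z.1 * z.2)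
        ((volume.restrict (Set.Ioi 0)).prod (volume.restrict (Set.Ioc 0 R))) :=
      MeasureTheory.Integrable.mul_prod hρint (continuous_id.integrableOn_Ioc)
    have hae : ∀ᵐ z : ℝ × ℝ
        ∂((volume.restrict (Set.Ioi 0)).prod (volume.restrict (Set.Ioc 0 R))),
        z ∈ (Set.Ioi (0:ℝ)) ×ˢ (Set.Ioc (0:ℝ) R) := by
      rw [MeasureTheory.Measure.prod_restrict]
      exact MeasureTheory.ae_restrict_mem (measurableSet_Ioi.prod measurableSet_Ioc)
    apply MeasureTheory.Integrable.mono hbound hfmeas.aestronglyMeasurable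
    filter_upwards [hae] with z hz
    have hx : (0:ℝ) < z.1 := hz.1
    have he : Real.exp (-(s * z.1 * (max z.2 d0) ^ (-alpha))) ≤ 1 := by
      rw [Real.exp_le_one_iff]
      have h0 : (0:ℝ) ≤ s * z.1 * (max z.2 d0) ^ (-alpha) :=
        mul_nonneg (mul_nonneg hs.le hx.le)
          (Real.rpow_nonneg (le_of_lt (lt_max_of_lt_right hd)) _)
      linarith
    have he0 : (0:ℝ) ≤ Real.exp (-(s * z.1 * (max z.2 d0) ^ (-alpha))) := (Real.exp_pos _).le
    rw [hf]
    simp only []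
    rw [norm_mul, norm_mul, norm_mul]
    have hee : ‖Real.exp (-(s * z.1 * (max z.2 d0) ^ (-alpha)))‖ ≤ 1 := by
      rw [Real.norm_eq_abs, abs_of_nonneg he0]; exact he
    calc ‖ρ z.1‖ * ‖Real.exp (-(s * z.1 * (max z.2 d0) ^ (-alpha)))‖ * ‖z.2‖
        = (‖ρ z.1‖ * ‖z.2‖) * ‖Real.exp (-(s * z.1 * (max z.2 d0) ^ (-alpha)))‖ := by ring
      _ ≤ (‖ρ z.1‖ * ‖z.2‖) * 1 :=
          mul_le_mul_of_nonneg_left hee (by positivity)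
      _ = ‖ρ z.1‖ * ‖z.2‖ := mul_one _
  -- rewrite the interval integral
  rw [intervalIntegral.integral_of_le hR.le]
  have hstep1 : (∫ r in Set.Ioc (0:ℝ) R,
        (1 - ∫ x in Set.Ioi (0:ℝ), ρ x * Real.exp (-(s * x * (max r d0) ^ (-alpha)))) * r)
      = (∫ r in Set.Ioc (0:ℝ) R, r)
        - ∫ r in Set.Ioc (0:ℝ) R, ∫ x in Set.Ioi (0:ℝ), f (x, r) := by
    rw [← MeasureTheory.integral_sub
      (continuous_id'.integrableOn_Ioc : IntegrableOn (fun r : ℝ => r) (Set.Ioc 0 R) volume)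
      (hfint.integral_prod_right)]
    apply MeasureTheory.setIntegral_congr_fun measurableSet_Ioc
    intro r _
    beta_reduce
    rw [sub_mul, one_mul, ← MeasureTheory.integral_mul_const]
  have hswap : (∫ r in Set.Ioc (0:ℝ) R, ∫ x in Set.Ioi (0:ℝ), f (x, r))
      = ∫ x in Set.Ioi (0:ℝ), ∫ r in Set.Ioc (0:ℝ) R, f (x, r) :=
    (MeasureTheory.integral_integral_swap (f := fun x r => f (x, r)) hfint).symm
  have hinner : ∀ x ∈ Set.Ioi (0:ℝ), (∫ r in Set.Ioc (0:ℝ) R, f (x, r))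
      = ρ x * (R ^ 2 / 2 * Real.exp (-(s * x * R ^ (-alpha)))
          - 1 / 2 * (s * x) ^ (2 / alpha)
            * (uG (1 - 2 / alpha) (s * x * R ^ (-alpha))
              - uG (1 - 2 / alpha) (s * x * d0 ^ (-alpha)))) := by
    intro x hx
    have hc : (0:ℝ) < s * x := mul_pos hs hx
    have hk := key_integral (c := s * x) hc hd hdR ha
    rw [← hk, ← MeasureTheory.integral_const_mul]
    apply MeasureTheory.setIntegral_congr_fun measurableSet_Ioc
    intro r _
    beta_reduce
    rw [hf]
    ring
  -- integrability pieces on (0, ∞)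
  have hA : IntegrableOn (fun x => ρ x * Real.exp (-(s * x * R ^ (-alpha)))) (Set.Ioi 0) := by
    have h := rho_mul_exp_integrable M hM (k := s * R ^ (-alpha)) (by positivity)
    exact MeasureTheory.IntegrableOn.congr_fun h
      (fun x _ => by rw [hρ, show s * R ^ (-alpha) * x = s * x * R ^ (-alpha) from by ring])
      measurableSet_Ioi
  have hAc : Integrable (fun x => R ^ 2 / 2 * (ρ x * Real.exp (-(s * x * R ^ (-alpha)))))
      (volume.restrict (Set.Ioi 0)) := hA.const_mul _
  have hInner : IntegrableOn (fun x => ∫ r in Set.Ioc (0:ℝ) R, f (x, r)) (Set.Ioi 0) :=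
    hfint.integral_prod_left
  have hB : Integrable (fun x => R ^ 2 / 2 * (ρ x * Real.exp (-(s * x * R ^ (-alpha))))
      - ∫ r in Set.Ioc (0:ℝ) R, f (x, r)) (volume.restrict (Set.Ioi 0)) := hAc.sub hInner
  have hsum : (∫ x in Set.Ioi (0:ℝ), ∫ r in Set.Ioc (0:ℝ) R, f (x, r))
      = R ^ 2 / 2 * (1 + s * R ^ (-alpha)) ^ (-(M : ℝ))
        - ∫ x in Set.Ioi (0:ℝ), (R ^ 2 / 2 * (ρ x * Real.exp (-(s * x * R ^ (-alpha))))
            - ∫ r in Set.Ioc (0:ℝ) R, f (x, r)) := by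
    have h1 : (∫ x in Set.Ioi (0:ℝ), ∫ r in Set.Ioc (0:ℝ) R, f (x, r))
        = (∫ x in Set.Ioi (0:ℝ), R ^ 2 / 2 * (ρ x * Real.exp (-(s * x * R ^ (-alpha)))))
          - ∫ x in Set.Ioi (0:ℝ), (R ^ 2 / 2 * (ρ x * Real.exp (-(s * x * R ^ (-alpha))))
              - ∫ r in Set.Ioc (0:ℝ) R, f (x, r)) := by
      rw [← MeasureTheory.integral_sub hAc hB]
      congr 1
      funext x
      ring
    rw [h1, MeasureTheory.integral_const_mul, part2]
  have hQ : (∫ x in Set.Ioi (0:ℝ), (R ^ 2 / 2 * (ρ x * Real.exp (-(s * x * R ^ (-alpha))))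
        - ∫ r in Set.Ioc (0:ℝ) R, f (x, r)))
      = ∫ x in Set.Ioi (0:ℝ), 1 / 2 * (ρ x * ((s * x) ^ (2 / alpha)
          * (uG (1 - 2 / alpha) (s * x * R ^ (-alpha))
            - uG (1 - 2 / alpha) (s * x * d0 ^ (-alpha))))) := by
    apply MeasureTheory.setIntegral_congr_fun measurableSet_Ioi
    intro x hx
    beta_reduce
    rw [hinner x hx]
    ring
  have hid : (∫ r in Set.Ioc (0:ℝ) R, r) = R ^ 2 / 2 := by
    rw [← intervalIntegral.integral_of_le hR.le, MyIntegralId.integral_id_copy]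
    ring
  rw [hstep1, hswap, hsum, hQ, hid, MeasureTheory.integral_const_mul]
  have huG1 : ∀ y : ℝ, uG (1 - 2 / alpha) y
      = ∫ t in Set.Ioi y, t ^ (1 - 2 / alpha - 1) * Real.exp (-t) := fun _ => rfl
  simp only [huG1]
  ring
end
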